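/- Let H be a real separable Hilbert space, I=[0,T] with T>0, S ⊆ H nonempty and closed, and z : I → H differentiable at a point t in the interior of I with derivative ż(t), and suppose z(t) ∉ S. Then the limit lim_{s↓0} [d_S(z(t+s)) − d_S(z(t))]/s exists and equals min_{w ∈ ∂d_S(z(t))} ⟨w, ż(t)⟩, where ∂d_S(z(t)) is the Clarke subdifferential of the distance function d_S at z(t). -/

import Mathlib

open Metric Set MeasureTheory Filter Pointwise
open scoped RealInnerProductSpace Topology

noncomputable section

variable {H : Type} [NormedAddCommGroup H] [InnerProductSpace ℝ H]

/-- The Clarke generalized directional derivative of `f` at `x` in direction `h`. -/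
def clarkeDeriv (f : H → ℝ) (x h : H) : ℝ :=
  Filter.limsup (fun p : H × ℝ => (f (p.1 + p.2 • h) - f p.1) / p.2)
    ((nhds x) ×ˢ (nhdsWithin 0 (Ioi (0:ℝ))))

/-- The Clarke subdifferential of `f` at `x`. -/
def clarkeSubdiff (f : H → ℝ) (x : H) : Set H :=
  {v : H | ∀ h : H, (inner ℝ v h : ℝ) ≤ clarkeDeriv f x h}

/-- The closure of a set with respect to the weak topology of `H`. -/
def weakClosure (A : Set H) : Set H :=
  (toWeakSpace ℝ H) ⁻¹' (closure ((toWeakSpace ℝ H) '' A))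

/-- The Clarke normal cone to `S` at `x`: the weak closure of `ℝ₊ ∂d_S(x)`. -/
def clarkeNormalCone (S : Set H) (x : H) : Set H :=
  weakClosure {w : H | ∃ l : ℝ, ∃ v ∈ clarkeSubdiff (fun u => infDist u S) x,
    0 ≤ l ∧ w = l • v}

/-- The (possibly empty) set of nearest points of `x` in `S`. -/
def projSet (S : Set H) (x : H) : Set H :=
  {y ∈ S | ‖x - y‖ = infDist x S}

/-- A family of closed sets is equi-uniformly subsmooth. -/
def EquiUniformlySubsmooth {ι : Sort*} (S : ι → Set H) : Prop :=
  ∀ ε > (0:ℝ), ∃ δ > (0:ℝ), ∀ j : ι, ∀ x₁ ∈ S j, ∀ x₂ ∈ S j, ‖x₁ - x₂‖ < δ →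
    ∀ v₁ ∈ clarkeNormalCone (S j) x₁ ∩ closedBall 0 1,
    ∀ v₂ ∈ clarkeNormalCone (S j) x₂ ∩ closedBall 0 1,
      -ε * ‖x₁ - x₂‖ ≤ (inner ℝ (v₁ - v₂) (x₁ - x₂) : ℝ)

/-- The Hausdorff measure of non-compactness of a set. -/
def hausMNC (A : Set H) : ℝ :=
  sInf {r : ℝ | 0 < r ∧ ∃ F : Finset H, A ⊆ ⋃ c ∈ F, closedBall c r}

/-- `v` is the derivative of the absolutely continuous function `x` on `[0,T]`. -/
def IsACDerivOn {E : Type} [NormedAddCommGroup E] [NormedSpace ℝ E] (T : ℝ)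
    (x v : ℝ → E) : Prop :=
  IntegrableOn v (Icc 0 T) volume ∧ ∀ t ∈ Icc 0 T, x t = x 0 + ∫ s in (0:ℝ)..t, v s

namespace RightDerivAux

variable {H : Type} [NormedAddCommGroup H] [InnerProductSpace ℝ H]

/-- The auxiliary convex function `u ↦ ‖u‖² - d_S(u)²`. -/
def gg (S : Set H) (u : H) : ℝ := ‖u‖ ^ 2 - (infDist u S) ^ 2

lemma gg_cont (S : Set H) : Continuous (gg S) :=
  ((continuous_norm).pow 2).sub ((continuous_infDist_pt S).pow 2)

lemma sq_dist_ident (u y : H) :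
    ‖u‖ ^ 2 - ‖u - y‖ ^ 2 = 2 * ⟪u, y⟫ - ‖y‖ ^ 2 := by
  have := norm_sub_sq_real u y; linarith

lemma gg_convex {S : Set H} (hne : S.Nonempty) (x y : H) (a b : ℝ) (ha : 0 ≤ a) (hb : 0 ≤ b)
    (hab : a + b = 1) : gg S (a • x + b • y) ≤ a * gg S x + b * gg S y := by
  refine le_of_forall_pos_le_add fun ε hε => ?_
  set u := a • x + b • y with hu
  have hlt : infDist u S < Real.sqrt ((infDist u S) ^ 2 + ε) :=
    (Real.lt_sqrt infDist_nonneg).mpr (by linarith)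
  obtain ⟨y', hy'S, hy'⟩ := (infDist_lt_iff hne).mp hlt
  have hsq : dist u y' ^ 2 < (infDist u S) ^ 2 + ε := by
    have h0 : (0:ℝ) ≤ dist u y' := dist_nonneg
    have h1 : Real.sqrt ((infDist u S) ^ 2 + ε) ^ 2 = (infDist u S) ^ 2 + ε :=
      Real.sq_sqrt (by positivity)
    nlinarith [Real.sqrt_nonneg ((infDist u S) ^ 2 + ε)]
  have e1 : gg S u ≤ ‖u‖ ^ 2 - ‖u - y'‖ ^ 2 + ε := by
    rw [← dist_eq_norm]; unfold gg; linarith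
  have hinner : ⟪u, y'⟫ = a * ⟪x, y'⟫ + b * ⟪y, y'⟫ := by
    rw [hu, inner_add_left, real_inner_smul_left, real_inner_smul_left]
  have e2 : ‖u‖ ^ 2 - ‖u - y'‖ ^ 2
      = a * (2 * ⟪x, y'⟫ - ‖y'‖ ^ 2) + b * (2 * ⟪y, y'⟫ - ‖y'‖ ^ 2) := by
    rw [sq_dist_ident, hinner]; nlinarith [hab]
  have e3 : 2 * ⟪x, y'⟫ - ‖y'‖ ^ 2 ≤ gg S x := by
    rw [← sq_dist_ident]
    have hd : infDist x S ≤ ‖x - y'‖ := by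
      rw [← dist_eq_norm]; exact infDist_le_dist_of_mem hy'S
    have := infDist_nonneg (x := x) (s := S)
    unfold gg; nlinarith
  have e4 : 2 * ⟪y, y'⟫ - ‖y'‖ ^ 2 ≤ gg S y := by
    rw [← sq_dist_ident]
    have hd : infDist y S ≤ ‖y - y'‖ := by
      rw [← dist_eq_norm]; exact infDist_le_dist_of_mem hy'S
    have := infDist_nonneg (x := y) (s := S)
    unfold gg; nlinarith
  nlinarith [mul_le_mul_of_nonneg_left e3 ha, mul_le_mul_of_nonneg_left e4 hb]

/-- Difference quotient of `gg` at `x` in direction `v`. -/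
def Qs (S : Set H) (x v : H) (s : ℝ) : ℝ := (gg S (x + s • v) - gg S x) / s

lemma Qs_mono {S : Set H} (hne : S.Nonempty) (x v : H) :
    MonotoneOn (Qs S x v) (Ioi 0) := by
  rintro s (hs : 0 < s) s' (hs' : 0 < s') hss'
  rcases eq_or_lt_of_le hss' with rfl | hlt
  · exact le_rfl
  · have hs'0 : s' ≠ 0 := ne_of_gt hs'
    have hθ0 : 0 ≤ s / s' := by positivity
    have hθ1 : 0 ≤ 1 - s / s' := by
      rw [sub_nonneg, div_le_one hs']; exact hlt.le
    have key : (1 - s / s') • x + (s / s') • (x + s' • v) = x + s • v := by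
      rw [smul_add, smul_smul, div_mul_cancel₀ _ hs'0, ← add_assoc, ← add_smul,
        sub_add_cancel, one_smul]
    have hcv := gg_convex hne x (x + s' • v) (1 - s / s') (s / s') hθ1 hθ0 (by ring)
    rw [key] at hcv
    unfold Qs
    rw [div_le_div_iff₀ hs hs']
    have e : (1 - s / s') * gg S x + (s / s') * gg S (x + s' • v)
        = gg S x + (s / s') * (gg S (x + s' • v) - gg S x) := by ring
    rw [e] at hcv
    have hmul := mul_le_mul_of_nonneg_right hcv hs'.le
    have h7 : (gg S x + s / s' * (gg S (x + s' • v) - gg S x)) * s'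
        = gg S x * s' + s * (gg S (x + s' • v) - gg S x) := by field_simp; try ring
    rw [h7] at hmul
    nlinarith [hmul]

lemma Qs_cross {S : Set H} (hne : S.Nonempty) (x v : H) {s r : ℝ} (hs : 0 < s) (hr : 0 < r) :
    -(Qs S x (-v) r) ≤ Qs S x v s := by
  have hsr : 0 < s + r := by linarith
  have ha : 0 ≤ s / (s + r) := by positivity
  have hb : 0 ≤ r / (s + r) := by positivity
  have key : (s / (s + r)) • (x + r • (-v)) + (r / (s + r)) • (x + s • v) = x := by
    match_scalars <;> (field_simp; try ring)
  have hcv := gg_convex hne (x + r • (-v)) (x + s • v) (s / (s + r)) (r / (s + r)) ha hb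
    (by field_simp)
  rw [key] at hcv
  unfold Qs
  rw [← neg_div, div_le_div_iff₀ hr hs]
  have e : (s + r) * ((s / (s + r)) * gg S (x + r • (-v)) + (r / (s + r)) * gg S (x + s • v))
      = s * gg S (x + r • (-v)) + r * gg S (x + s • v) := by field_simp; try ring
  have hmul := mul_le_mul_of_nonneg_left hcv hsr.le
  rw [e] at hmul
  linarith

/-- The right directional derivative of `gg` at `x` in direction `v`. -/
def gder (S : Set H) (x v : H) : ℝ := sInf (Qs S x v '' Ioi 0)

lemma Qs_bddBelow {S : Set H} (hne : S.Nonempty) (x v : H) :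
    BddBelow (Qs S x v '' Ioi 0) := by
  refine ⟨-(Qs S x (-v) 1), ?_⟩
  rintro _ ⟨s, hs, rfl⟩
  exact Qs_cross hne x v hs one_pos

lemma tendsto_Qs {S : Set H} (hne : S.Nonempty) (x v : H) :
    Tendsto (Qs S x v) (𝓝[>] 0) (𝓝 (gder S x v)) :=
  (Qs_mono hne x v).tendsto_nhdsGT (Qs_bddBelow hne x v)

lemma gder_le_Qs {S : Set H} (hne : S.Nonempty) (x v : H) {s : ℝ} (hs : 0 < s) :
    gder S x v ≤ Qs S x v s :=
  csInf_le (Qs_bddBelow hne x v) ⟨s, hs, rfl⟩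

lemma neg_Qs_le_gder {S : Set H} (hne : S.Nonempty) (x v : H) {r : ℝ} (hr : 0 < r) :
    -(Qs S x (-v) r) ≤ gder S x v := by
  refine le_csInf (nonempty_Ioi.image _) ?_
  rintro _ ⟨s, hs, rfl⟩
  exact Qs_cross hne x v hs hr

lemma gder_zero (S : Set H) (x : H) : gder S x 0 = 0 := by
  have h : Qs S x 0 '' Ioi 0 = {0} := by
    have : ∀ s : ℝ, Qs S x 0 s = 0 := fun s => by simp [Qs]
    rw [show Qs S x 0 = fun _ : ℝ => (0:ℝ) from funext this]
    exact Set.Nonempty.image_const nonempty_Ioi 0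
  rw [gder, h, csInf_singleton]

lemma tendsto_mul_pos {c : ℝ} (hc : 0 < c) :
    Tendsto (fun s : ℝ => c * s) (𝓝[>] 0) (𝓝[>] 0) := by
  apply tendsto_nhdsWithin_of_tendsto_nhds_of_eventually_within
  · have : Tendsto (fun s : ℝ => c * s) (𝓝 0) (𝓝 (c * 0)) :=
      (continuous_const.mul continuous_id).tendsto 0
    simpa using this.mono_left nhdsWithin_le_nhds
  · exact eventually_nhdsWithin_of_forall fun s hs => mul_pos hc hs

lemma gder_smul {S : Set H} (hne : S.Nonempty) (x v : H) {c : ℝ} (hc : 0 < c) :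
    gder S x (c • v) = c * gder S x v := by
  have h2 : Qs S x (c • v) = fun s => c * Qs S x v (c * s) := by
    funext s
    unfold Qs
    rw [smul_smul, mul_comm s c]
    rcases eq_or_ne s 0 with rfl | hs
    · simp
    · rw [mul_div_assoc', mul_div_mul_left _ _ (ne_of_gt hc)]
  have h3 : Tendsto (fun s => c * Qs S x v (c * s)) (𝓝[>] 0) (𝓝 (c * gder S x v)) :=
    ((tendsto_Qs hne x v).comp (tendsto_mul_pos hc)).const_mul c
  exact tendsto_nhds_unique (h2 ▸ tendsto_Qs hne x (c • v)) h3

lemma gder_add {S : Set H} (hne : S.Nonempty) (x v w : H) :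
    gder S x (v + w) ≤ gder S x v + gder S x w := by
  have hmap := tendsto_mul_pos (two_pos (α := ℝ))
  refine le_of_tendsto_of_tendsto (tendsto_Qs hne x (v + w))
    (((tendsto_Qs hne x v).comp hmap).add ((tendsto_Qs hne x w).comp hmap)) ?_
  filter_upwards [self_mem_nhdsWithin] with s hs
  have hs : (0:ℝ) < s := hs
  have h2s : (0:ℝ) < 2 * s := by linarith
  have key : (1/2 : ℝ) • (x + (2*s) • v) + (1/2 : ℝ) • (x + (2*s) • w) = x + s • (v + w) := by
    match_scalars <;> ring
  have hcv := gg_convex hne (x + (2*s) • v) (x + (2*s) • w) (1/2) (1/2)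
    (by norm_num) (by norm_num) (by norm_num)
  rw [key] at hcv
  show Qs S x (v + w) s ≤ Qs S x v (2 * s) + Qs S x w (2 * s)
  unfold Qs
  rw [← add_div, div_le_div_iff₀ hs h2s]
  nlinarith [mul_le_mul_of_nonneg_right hcv hs.le]

lemma gder_neg_add_nonneg {S : Set H} (hne : S.Nonempty) (x v : H) :
    0 ≤ gder S x v + gder S x (-v) := by
  have h := gder_add hne x v (-v)
  rw [add_neg_cancel, gder_zero] at h
  linarith

end RightDerivAux

namespace RightDerivAux

variable {H : Type} [NormedAddCommGroup H] [InnerProductSpace ℝ H]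

lemma abs_dist_quot_le (S : Set H) (hne : S.Nonempty) {t : ℝ} (ht : 0 < t) (y v : H) :
    |(infDist (y + t • v) S - infDist y S) / t| ≤ ‖v‖ := by
  have h1 : |infDist (y + t • v) S - infDist y S| ≤ dist (y + t • v) y := by
    have := (lipschitz_infDist_pt S).dist_le_mul (y + t • v) y
    rw [Real.dist_eq] at this
    simpa using this
  have h2 : dist (y + t • v) y = t * ‖v‖ := by
    rw [dist_eq_norm]
    simp [norm_smul, abs_of_pos ht]
  rw [abs_div, abs_of_pos ht, div_le_iff₀ ht]
  rw [h2] at h1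
  linarith

lemma tendsto_dirQuot {S : Set H} (hne : S.Nonempty) (hcl : IsClosed S) {x : H}
    (hx : x ∉ S) (v : H) :
    Tendsto (fun s : ℝ => (infDist (x + s • v) S - infDist x S) / s) (𝓝[>] 0)
      (𝓝 ((2 * ⟪x, v⟫ - gder S x v) / (2 * infDist x S))) := by
  have hdx : 0 < infDist x S := (hcl.notMem_iff_infDist_pos hne).mp hx
  have hnum : Tendsto (fun s : ℝ => ((infDist (x + s • v) S) ^ 2 - (infDist x S) ^ 2) / s)
      (𝓝[>] 0) (𝓝 (2 * ⟪x, v⟫ - gder S x v)) := by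
    have h2 : Tendsto (fun s : ℝ => (2 * ⟪x, v⟫ + s * ‖v‖ ^ 2) - Qs S x v s) (𝓝[>] 0)
        (𝓝 (2 * ⟪x, v⟫ - gder S x v)) := by
      have hc : Tendsto (fun s : ℝ => 2 * ⟪x, v⟫ + s * ‖v‖ ^ 2) (𝓝[>] 0)
          (𝓝 (2 * ⟪x, v⟫)) := by
        have : Continuous (fun s : ℝ => 2 * ⟪x, v⟫ + s * ‖v‖ ^ 2) := by continuity
        have h0 := (this.tendsto 0).mono_left (nhdsWithin_le_nhds (s := Ioi (0:ℝ)))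
        simpa using h0
      simpa using hc.sub (tendsto_Qs hne x v)
    refine h2.congr' ?_
    filter_upwards [self_mem_nhdsWithin] with s hs
    have hs0 : s ≠ 0 := ne_of_gt hs
    have hn : ‖x + s • v‖ ^ 2 = ‖x‖ ^ 2 + s * (2 * ⟪x, v⟫) + s ^ 2 * ‖v‖ ^ 2 := by
      rw [norm_add_sq_real, real_inner_smul_right, norm_smul, mul_pow, Real.norm_eq_abs,
        sq_abs]
      ring
    unfold Qs gg
    rw [hn]
    field_simp
    ring
  have hden : Tendsto (fun s : ℝ => infDist (x + s • v) S + infDist x S) (𝓝[>] 0)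
      (𝓝 (2 * infDist x S)) := by
    have hc : Continuous fun s : ℝ => infDist (x + s • v) S + infDist x S := by
      apply Continuous.add _ continuous_const
      exact (continuous_infDist_pt S).comp (continuous_const.add (continuous_id.smul
        continuous_const))
    have h0 := (hc.tendsto 0).mono_left (nhdsWithin_le_nhds (s := Ioi (0:ℝ)))
    simpa [two_mul] using h0
  have h3 := hnum.div hden (by positivity)
  refine h3.congr' ?_
  filter_upwards [self_mem_nhdsWithin] with s hs
  have hs0 : s ≠ 0 := ne_of_gt (show (0:ℝ) < s from hs)
  have hd : 0 < infDist (x + s • v) S + infDist x S :=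
    add_pos_of_nonneg_of_pos infDist_nonneg hdx
  rw [Pi.div_apply]
  field_simp
  ring

lemma clarkeDeriv_le_norm' (S : Set H) (hne : S.Nonempty) (x v : H) :
    Filter.limsup (fun p : H × ℝ => (infDist (p.1 + p.2 • v) S - infDist p.1 S) / p.2)
      ((𝓝 x) ×ˢ (𝓝[>] (0:ℝ))) ≤ ‖v‖ := by
  have hpos : ∀ᶠ p : H × ℝ in (𝓝 x) ×ˢ (𝓝[>] (0:ℝ)), 0 < p.2 :=
    (eventually_nhdsWithin_of_forall fun s hs => hs).prod_inr _
  have hband := hpos.mono fun p hp => abs_dist_quot_le S hne hp p.1 v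
  refine limsup_le_of_le ?_ (hband.mono fun p h => (abs_le.mp h).2)
  exact (isBoundedUnder_of_eventually_ge
    (hband.mono fun p h => (abs_le.mp h).1)).isCoboundedUnder_le

set_option maxHeartbeats 1000000 in
lemma clarkeDeriv_formula {S : Set H} (hne : S.Nonempty) (hcl : IsClosed S) {x : H}
    (hx : x ∉ S) (v : H) :
    Filter.limsup (fun p : H × ℝ => (infDist (p.1 + p.2 • v) S - infDist p.1 S) / p.2)
      ((𝓝 x) ×ˢ (𝓝[>] (0:ℝ)))
      = (2 * ⟪x, v⟫ + gder S x (-v)) / (2 * infDist x S) := by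
  have hdx : 0 < infDist x S := (hcl.notMem_iff_infDist_pos hne).mp hx
  set dx := infDist x S with hdxdef
  set F := (𝓝 x) ×ˢ (𝓝[>] (0:ℝ)) with hF
  set u : H × ℝ → ℝ := fun p => (infDist (p.1 + p.2 • v) S - infDist p.1 S) / p.2 with hu
  set C := (2 * ⟪x, v⟫ + gder S x (-v)) / (2 * dx) with hC
  have hFle : F ≤ 𝓝 ((x, 0) : H × ℝ) := by
    rw [hF, nhds_prod_eq]
    exact Filter.prod_mono le_rfl nhdsWithin_le_nhds
  have hpos : ∀ᶠ p : H × ℝ in F, 0 < p.2 :=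
    (eventually_nhdsWithin_of_forall fun s hs => hs).prod_inr _
  have hband : ∀ᶠ p in F, |u p| ≤ ‖v‖ := hpos.mono fun p hp => abs_dist_quot_le S hne hp p.1 v
  have hbdd : IsBoundedUnder (· ≤ ·) F u :=
    isBoundedUnder_of_eventually_le (hband.mono fun p h => (abs_le.mp h).2)
  have hcob : IsCoboundedUnder (· ≤ ·) F u :=
    (isBoundedUnder_of_eventually_ge
      (hband.mono fun p h => (abs_le.mp h).1)).isCoboundedUnder_le
  -- lower bound via the path s ↦ (x - s • v, s)
  have hpath : Tendsto (fun s : ℝ => ((x - s • v : H), s)) (𝓝[>] 0) F := by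
    rw [hF]
    refine Tendsto.prodMk ?_ tendsto_id
    have : Continuous fun s : ℝ => x - s • v :=
      continuous_const.sub (continuous_id.smul continuous_const)
    have h0 := (this.tendsto 0).mono_left (nhdsWithin_le_nhds (s := Ioi (0:ℝ)))
    simpa using h0
  have hupath : Tendsto (fun s : ℝ => u (x - s • v, s)) (𝓝[>] 0) (𝓝 C) := by
    have h1 := (tendsto_dirQuot hne hcl hx (-v)).neg
    have heq : ∀ s : ℝ, u (x - s • v, s) = -((infDist (x + s • (-v)) S - infDist x S) / s) := by
      intro s
      have e1 : (x - s • v) + s • v = x := by abel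
      have e2 : x + s • (-v) = x - s • v := by rw [smul_neg, ← sub_eq_add_neg]
      rw [hu]
      simp only [e1, e2]
      rw [← neg_div, neg_sub]
    have hval : -((2 * ⟪x, -v⟫ - gder S x (-v)) / (2 * dx)) = C := by
      rw [hC, inner_neg_right]
      field_simp
      ring
    rw [← hval]
    exact h1.congr fun s => (heq s).symm
  have hlow : C ≤ limsup u F := by
    refine le_of_forall_pos_le_add fun ε hε => ?_
    have hev : ∀ᶠ s : ℝ in 𝓝[>] 0, C - ε ≤ u (x - s • v, s) :=
      (hupath.eventually (eventually_gt_nhds (by linarith))).mono fun s hs => hs.le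
    have hfreq : ∃ᶠ p in F, C - ε ≤ u p := hpath.frequently hev.frequently
    have := le_limsup_of_frequently_le hfreq hbdd
    linarith
  have hup : limsup u F ≤ C := by
    refine le_of_forall_pos_le_add fun ε hε => ?_
    refine limsup_le_of_le hcob ?_
    -- choose s0 with Qs S x (-v) s0 < gder S x (-v) + dx * ε / 4
    obtain ⟨b, ⟨s0, hs0, rfl⟩, hb⟩ :=
      exists_lt_of_csInf_lt (nonempty_Ioi.image _)
        (show gder S x (-v) < gder S x (-v) + dx * ε / 4 by nlinarith)
    have hs0' : (0:ℝ) < s0 := hs0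
    set δ := min dx (dx * ε / (|C + ε| + 1)) with hδ
    have hδpos : 0 < δ := lt_min hdx (by positivity)
    have hev1 : ∀ᶠ p : H × ℝ in F, |2 * ⟪p.1, v⟫ + p.2 * ‖v‖ ^ 2 - 2 * ⟪x, v⟫| < dx * ε / 4 := by
      have hc : Continuous (fun p : H × ℝ => 2 * ⟪p.1, v⟫ + p.2 * ‖v‖ ^ 2) := by
        apply Continuous.add
        · exact continuous_const.mul (continuous_fst.inner continuous_const)
        · exact continuous_snd.mul continuous_const
      have ht : Tendsto (fun p : H × ℝ => 2 * ⟪p.1, v⟫ + p.2 * ‖v‖ ^ 2) F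
          (𝓝 (2 * ⟪x, v⟫)) := by
        have := (hc.tendsto (x, 0)).mono_left hFle
        simpa using this
      have := Metric.tendsto_nhds.mp ht (dx * ε / 4) (by positivity)
      simpa [Real.dist_eq] using this
    have hev2 : ∀ᶠ p : H × ℝ in F,
        |(gg S p.1 - gg S (p.1 - s0 • v)) / s0 - (gg S x - gg S (x - s0 • v)) / s0|
          < dx * ε / 4 := by
      have hc : Continuous (fun p : H × ℝ => (gg S p.1 - gg S (p.1 - s0 • v)) / s0) := by
        apply Continuous.div_const
        exact ((gg_cont S).comp continuous_fst).sub
          ((gg_cont S).comp (continuous_fst.sub continuous_const))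
      have ht := (hc.tendsto (x, 0)).mono_left hFle
      have := Metric.tendsto_nhds.mp ht (dx * ε / 4) (by positivity)
      simpa [Real.dist_eq] using this
    have hev3 : ∀ᶠ p : H × ℝ in F,
        |infDist (p.1 + p.2 • v) S + infDist p.1 S - 2 * dx| < δ := by
      have hc : Continuous (fun p : H × ℝ => infDist (p.1 + p.2 • v) S + infDist p.1 S) := by
        apply Continuous.add
        · exact (continuous_infDist_pt S).comp (continuous_fst.add
            (continuous_snd.smul continuous_const))
        · exact (continuous_infDist_pt S).comp continuous_fst
      have ht : Tendsto (fun p : H × ℝ => infDist (p.1 + p.2 • v) S + infDist p.1 S) F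
          (𝓝 (2 * dx)) := by
        have := (hc.tendsto (x, 0)).mono_left hFle
        simpa [two_mul] using this
      have := Metric.tendsto_nhds.mp ht δ hδpos
      simpa [Real.dist_eq] using this
    filter_upwards [hpos, hev1, hev2, hev3] with p h0 h1 h2 h3
    set y := p.1
    set tt := p.2
    -- identify -(Qs · (-v) s0) with the shifted slope
    have hkey : ∀ z : H, (gg S z - gg S (z - s0 • v)) / s0 = -(Qs S z (-v) s0) := by
      intro z
      unfold Qs
      rw [smul_neg, ← sub_eq_add_neg, ← neg_sub, neg_div]
    have hQlow : -(Qs S y (-v) s0) ≤ Qs S y v tt := Qs_cross hne y v h0 hs0'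
    have hQyx : (gg S y - gg S (y - s0 • v)) / s0
        > (gg S x - gg S (x - s0 • v)) / s0 - dx * ε / 4 := by
      have := (abs_lt.mp h2).1; linarith
    have hxb : (gg S x - gg S (x - s0 • v)) / s0 > -(gder S x (-v)) - dx * ε / 4 := by
      rw [hkey x]; linarith
    have hQ : Qs S y v tt ≥ -(gder S x (-v)) - dx * ε / 2 := by
      rw [hkey y] at hQyx
      linarith
    have hD : 0 < infDist (y + tt • v) S + infDist y S := by
      have h4 : δ ≤ dx := min_le_left _ _
      have := (abs_lt.mp h3).1
      linarith
    have hmul : u p * (infDist (y + tt • v) S + infDist y S)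
        = 2 * ⟪y, v⟫ + tt * ‖v‖ ^ 2 - Qs S y v tt := by
      have htne : tt ≠ 0 := ne_of_gt h0
      have hn : ‖y + tt • v‖ ^ 2 = ‖y‖ ^ 2 + tt * (2 * ⟪y, v⟫) + tt ^ 2 * ‖v‖ ^ 2 := by
        rw [norm_add_sq_real, real_inner_smul_right, norm_smul, mul_pow, Real.norm_eq_abs,
          sq_abs]
        ring
      show (infDist (y + tt • v) S - infDist y S) / tt * _ = _
      unfold Qs gg
      rw [hn]
      field_simp
      try ring
    have hCval : 2 * dx * C = 2 * ⟪x, v⟫ + gder S x (-v) := by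
      rw [hC]; field_simp; try ring
    have hNp : u p * (infDist (y + tt • v) S + infDist y S) ≤ 2 * dx * C + dx * ε := by
      rw [hmul, hCval]
      have e1 : 2 * ⟪y, v⟫ + tt * ‖v‖ ^ 2 ≤ 2 * ⟪x, v⟫ + dx * ε / 4 := by
        have := (abs_lt.mp h1).2; linarith
      have hde : 0 < dx * ε := mul_pos hdx hε
      linarith
    have hCD : 2 * dx * C + dx * ε ≤ (C + ε) * (infDist (y + tt • v) S + infDist y S) := by
      have habs : |(C + ε) * ((infDist (y + tt • v) S + infDist y S) - 2 * dx)| ≤ |C + ε| * δ := by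
        rw [abs_mul]
        exact mul_le_mul_of_nonneg_left (le_of_lt h3) (abs_nonneg _)
      have h5 : -(|C + ε| * δ) ≤ (C + ε) * ((infDist (y + tt • v) S + infDist y S) - 2 * dx) := by
        have := neg_abs_le ((C + ε) * ((infDist (y + tt • v) S + infDist y S) - 2 * dx))
        linarith
      have h6 : |C + ε| * δ ≤ dx * ε := by
        have h7 : δ ≤ dx * ε / (|C + ε| + 1) := min_le_right _ _
        have h8 : |C + ε| * δ ≤ |C + ε| * (dx * ε / (|C + ε| + 1)) :=
          mul_le_mul_of_nonneg_left h7 (abs_nonneg _)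
        have h9 : (0:ℝ) < |C + ε| + 1 := by positivity
        have h10 : |C + ε| * (dx * ε / (|C + ε| + 1)) ≤ dx * ε := by
          rw [mul_div_assoc', div_le_iff₀ h9]
          nlinarith [abs_nonneg (C + ε), mul_pos hdx hε]
        linarith
      have h11 : (C + ε) * (infDist (y + tt • v) S + infDist y S)
          = (C + ε) * (2 * dx) + (C + ε) * ((infDist (y + tt • v) S + infDist y S) - 2 * dx) := by
        ring
      have h12 : (C + ε) * (2 * dx) = 2 * dx * C + 2 * dx * ε := by ring
      have hde : 0 < dx * ε := mul_pos hdx hε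
      linarith
    have hfin : u p * (infDist (y + tt • v) S + infDist y S)
        ≤ (C + ε) * (infDist (y + tt • v) S + infDist y S) := le_trans hNp hCD
    exact le_of_mul_le_mul_right hfin hD
  exact le_antisymm hup hlow

end RightDerivAux

namespace RightDerivAux

variable {H : Type} [NormedAddCommGroup H] [InnerProductSpace ℝ H]

lemma clarkeDeriv_infDist (S : Set H) (x v : H) :
    clarkeDeriv (fun u => infDist u S) x v
      = Filter.limsup (fun p : H × ℝ => (infDist (p.1 + p.2 • v) S - infDist p.1 S) / p.2)
        ((𝓝 x) ×ˢ (𝓝[>] (0:ℝ))) := rfl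

/-- Hahn–Banach based representation: dominated extension realized by an inner product. -/
lemma hb_helper [CompleteSpace H] (N : H → ℝ)
    (N_hom : ∀ c : ℝ, 0 < c → ∀ v, N (c • v) = c * N v)
    (N_add : ∀ v w, N (v + w) ≤ N v + N w)
    (N_le : ∀ v, N v ≤ ‖v‖)
    (f : H →ₗ.[ℝ] ℝ) (hf : ∀ u : f.domain, f u ≤ N u) :
    ∃ w : H, (∀ v, ⟪w, v⟫ ≤ N v) ∧ ∀ u : f.domain, ⟪w, (u : H)⟫ = f u := by
  obtain ⟨g, hg1, hg2⟩ := exists_extension_of_le_sublinear f N N_hom N_add hf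
  have hgb : ∀ v, |g v| ≤ ‖v‖ := by
    intro v
    refine abs_le.mpr ⟨?_, (hg2 v).trans (N_le v)⟩
    have := (hg2 (-v)).trans (N_le (-v))
    rw [map_neg, norm_neg] at this
    linarith
  let G : H →L[ℝ] ℝ := LinearMap.mkContinuous g 1 (fun v => by
    rw [one_mul, Real.norm_eq_abs]; exact hgb v)
  have hw : ∀ v : H, ⟪(InnerProductSpace.toDual ℝ H).symm G, v⟫ = g v := by
    intro v
    rw [InnerProductSpace.toDual_symm_apply]
    rfl
  exact ⟨(InnerProductSpace.toDual ℝ H).symm G,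
    fun v => (hw v).le.trans (hg2 v),
    fun u => by rw [hw]; exact hg1 u⟩

lemma exists_subdiff [CompleteSpace H] {S : Set H} (hne : S.Nonempty) (hcl : IsClosed S)
    {x : H} (hx : x ∉ S) (h : H) :
    ∃ w ∈ clarkeSubdiff (fun u => infDist u S) x,
      ⟪w, h⟫ = -(clarkeDeriv (fun u => infDist u S) x (-h)) := by
  have hdx : 0 < infDist x S := (hcl.notMem_iff_infDist_pos hne).mp hx
  set N : H → ℝ := fun v => clarkeDeriv (fun u => infDist u S) x v with hNdef
  have N_formula : ∀ v, N v = (2 * ⟪x, v⟫ + gder S x (-v)) / (2 * infDist x S) := by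
    intro v
    show clarkeDeriv (fun u => infDist u S) x v = _
    rw [clarkeDeriv_infDist]
    exact clarkeDeriv_formula hne hcl hx v
  have N_le : ∀ v, N v ≤ ‖v‖ := by
    intro v
    show clarkeDeriv (fun u => infDist u S) x v ≤ ‖v‖
    rw [clarkeDeriv_infDist]
    exact clarkeDeriv_le_norm' S hne x v
  have N_hom : ∀ c : ℝ, 0 < c → ∀ v, N (c • v) = c * N v := by
    intro c hc v
    rw [N_formula, N_formula, real_inner_smul_right,
      show -(c • v) = c • (-v) from (smul_neg c v).symm, gder_smul hne x (-v) hc]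
    field_simp
  have N_add : ∀ v w, N (v + w) ≤ N v + N w := by
    intro v w
    rw [N_formula, N_formula, N_formula, ← add_div]
    have h1 : gder S x (-(v + w)) ≤ gder S x (-v) + gder S x (-w) := by
      rw [show -(v + w) = -v + -w from neg_add v w]
      exact gder_add hne x (-v) (-w)
    have h2 : ⟪x, v + w⟫ = ⟪x, v⟫ + ⟪x, w⟫ := inner_add_right x v w
    have hd : (0:ℝ) < 2 * infDist x S := by positivity
    rw [div_le_div_iff₀ hd hd]
    have hXY : 2 * ⟪x, v + w⟫ + gder S x (-(v + w))
        ≤ 2 * ⟪x, v⟫ + gder S x (-v) + (2 * ⟪x, w⟫ + gder S x (-w)) := by linarith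
    nlinarith [mul_le_mul_of_nonneg_right hXY hd.le]
  have N_zero : N 0 = 0 := by
    rw [N_formula]
    simp [gder_zero]
  have hsum : 0 ≤ N h + N (-h) := by
    have := N_add h (-h)
    rw [add_neg_cancel, N_zero] at this
    linarith
  by_cases hh : h = 0
  · subst hh
    have hf : ∀ u : (⟨⊥, 0⟩ : H →ₗ.[ℝ] ℝ).domain, (⟨⊥, 0⟩ : H →ₗ.[ℝ] ℝ) u ≤ N u := by
      rintro ⟨u1, hu1⟩
      have hu : u1 = 0 := (Submodule.mem_bot ℝ).mp hu1
      subst hu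
      show (0:ℝ) ≤ N 0
      rw [N_zero]
    obtain ⟨w, hw1, _⟩ := hb_helper N N_hom N_add N_le ⟨⊥, 0⟩ hf
    refine ⟨w, fun v => hw1 v, ?_⟩
    rw [inner_zero_right, neg_zero]
    show (0:ℝ) = -(N 0)
    rw [N_zero, neg_zero]
  · have Hc : ∀ c : ℝ, c • h = 0 → c • (-(N (-h))) = 0 := by
      intro c hc0
      rcases smul_eq_zero.mp hc0 with hc | hc
      · rw [hc, zero_smul]
      · exact absurd hc hh
    set f := LinearPMap.mkSpanSingleton' (σ := RingHom.id ℝ) h (-(N (-h))) Hc with hfdef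
    have hf : ∀ u : f.domain, f u ≤ N u := by
      rintro ⟨u1, hu1⟩
      have hu1' : u1 ∈ (Submodule.span ℝ {h} : Submodule ℝ H) := hu1
      obtain ⟨c, hc⟩ := Submodule.mem_span_singleton.mp hu1'
      subst hc
      have happ : f ⟨c • h, hu1⟩ = c • (-(N (-h))) :=
        LinearPMap.mkSpanSingleton'_apply (σ := RingHom.id ℝ) h (-(N (-h))) Hc c hu1
      rw [happ, smul_eq_mul]
      show c * -(N (-h)) ≤ N (c • h)
      rcases lt_trichotomy c 0 with hc0 | hc0 | hc0
      · have h1 : c • h = (-c) • (-h) := by rw [neg_smul, smul_neg, neg_neg]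
        rw [h1, N_hom (-c) (by linarith) (-h)]
        exact le_of_eq (by ring)
      · subst hc0
        rw [zero_smul]
        rw [N_zero]
        simp
      · rw [N_hom c hc0 h]
        have hα : -(N (-h)) ≤ N h := by linarith
        calc c * -(N (-h)) ≤ c * N h := mul_le_mul_of_nonneg_left hα hc0.le
          _ = c * N h := rfl
    obtain ⟨w, hw1, hw2⟩ := hb_helper N N_hom N_add N_le f hf
    have hmem : h ∈ f.domain := by
      show h ∈ (Submodule.span ℝ {h} : Submodule ℝ H)
      exact Submodule.mem_span_singleton_self h
    refine ⟨w, fun v => hw1 v, ?_⟩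
    have := hw2 ⟨h, hmem⟩
    rw [this]
    show f ⟨h, hmem⟩ = -(N (-h))
    exact LinearPMap.mkSpanSingleton'_apply_self (σ := RingHom.id ℝ) h (-(N (-h))) Hc hmem

end RightDerivAux

open RightDerivAux

/-- Lemma 4.4(iv): if `z(t) ∉ S`, the right derivative of `t ↦ d_S(z(t))` exists and
equals the minimum of `⟨w, ż(t)⟩` over the Clarke subdifferential `∂d_S(z(t))`. -/
theorem right_deriv_dist_eq_min_inner
    {H : Type} [NormedAddCommGroup H] [InnerProductSpace ℝ H] [CompleteSpace H]
    [TopologicalSpace.SeparableSpace H]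
    (T : ℝ) (hT : 0 < T)
    (S : Set H) (hne : S.Nonempty) (hcl : IsClosed S)
    (z : ℝ → H) (t : ℝ) (ht : t ∈ Ioo (0:ℝ) T)
    (z' : H) (hz : HasDerivAt z z' t) (hout : z t ∉ S) :
    Filter.Tendsto
        (fun s : ℝ => (infDist (z (t + s)) S - infDist (z t) S) / s)
        (nhdsWithin 0 (Ioi (0:ℝ)))
        (nhds (sInf ((fun w : H => (inner ℝ w z' : ℝ)) ''
          clarkeSubdiff (fun u => infDist u S) (z t)))) := by
  have hdx : 0 < infDist (z t) S := (hcl.notMem_iff_infDist_pos hne).mp hout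
  set x := z t with hxdef
  set Ld := (2 * (inner ℝ x z' : ℝ) - gder S x z') / (2 * infDist x S) with hLd
  have hNf : ∀ v : H, clarkeDeriv (fun u => infDist u S) x v
      = (2 * (inner ℝ x v : ℝ) + gder S x (-v)) / (2 * infDist x S) := fun v => by
    rw [clarkeDeriv_infDist]
    exact clarkeDeriv_formula hne hcl hout v
  have hval : -(clarkeDeriv (fun u => infDist u S) x (-z')) = Ld := by
    rw [hNf (-z'), inner_neg_right, neg_neg, hLd, ← neg_div]
    congr 1
    ring
  have hleast : IsLeast ((fun w : H => (inner ℝ w z' : ℝ)) ''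
      clarkeSubdiff (fun u => infDist u S) x) Ld := by
    constructor
    · obtain ⟨w, hw, hwv⟩ := exists_subdiff hne hcl hout z'
      exact ⟨w, hw, hwv.trans hval⟩
    · rintro r ⟨w, hw, rfl⟩
      have h1 := hw (-z')
      rw [inner_neg_right] at h1
      show Ld ≤ (inner ℝ w z' : ℝ)
      linarith
  rw [hleast.csInf_eq]
  -- the limit along the curve
  have h1 : Tendsto (fun s : ℝ => (infDist (x + s • z') S - infDist x S) / s) (𝓝[>] 0)
      (𝓝 Ld) := by
    rw [hLd]
    exact tendsto_dirQuot hne hcl hout z'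
  have hslope := hz.tendsto_slope_zero_right
  have h2 : Tendsto (fun s : ℝ => ‖s⁻¹ • (z (t + s) - z t) - z'‖) (𝓝[>] 0) (𝓝 0) :=
    tendsto_iff_norm_sub_tendsto_zero.mp hslope
  have h3 : Tendsto (fun s : ℝ => (infDist (z (t + s)) S - infDist (x + s • z') S) / s)
      (𝓝[>] 0) (𝓝 0) := by
    apply squeeze_zero_norm' _ h2
    filter_upwards [self_mem_nhdsWithin] with s hs
    have hs' : (0:ℝ) < s := hs
    have hsne : s ≠ 0 := ne_of_gt hs'
    have hlip : |infDist (z (t + s)) S - infDist (x + s • z') S|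
        ≤ ‖z (t + s) - (x + s • z')‖ := by
      have := (lipschitz_infDist_pt S).dist_le_mul (z (t + s)) (x + s • z')
      rw [Real.dist_eq, dist_eq_norm] at this
      simpa using this
    have hid : s⁻¹ • (z (t + s) - z t) - z' = s⁻¹ • (z (t + s) - (x + s • z')) := by
      rw [smul_sub, smul_sub, smul_add, smul_smul, inv_mul_cancel₀ hsne, one_smul]
      abel
    rw [Real.norm_eq_abs, abs_div, abs_of_pos hs', hid, norm_smul, norm_inv,
      Real.norm_eq_abs, abs_of_pos hs', div_eq_inv_mul]
    exact mul_le_mul_of_nonneg_left hlip (by positivity)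
  have h4 := h1.add h3
  rw [add_zero] at h4
  refine h4.congr fun s => ?_
  rw [← add_div]
  congr 1
  ring


end
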